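/- A group G is weakly surjunctive if and only if every finitely generated subgroup of G is weakly surjunctive. -/
import Mathlib


/-- A cellular automaton over the group `G` and the alphabet `A`. -/
def IsCellularAutomaton {G A : Type*} [Group G] (τ : (G → A) → (G → A)) : Prop :=
  ∃ (M : Finset G) (μ : (M → A) → A),
    ∀ (c : G → A) (g : G), τ c g = μ (fun m => c (g * m.1))

/-- A group cellular automaton: a cellular automaton which is moreover a group
homomorphism for the pointwise group structure on `A^G`. -/
def IsGroupCellularAutomaton {G A : Type*} [Group G] [Group A]
    (τ : (G → A) → (G → A)) : Prop :=
  IsCellularAutomaton τ ∧ ∀ x y : G → A, τ (x * y) = τ x * τ y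

/-- A group `G` is weakly surjunctive if for every finite group alphabet `A`,
every injective group cellular automaton `A^G → A^G` is surjective. -/
def WeaklySurjunctive (G : Type*) [Group G] : Prop :=
  ∀ (A : Type) [Group A] [Fintype A] (τ : (G → A) → (G → A)),
    IsGroupCellularAutomaton τ → Function.Injective τ → Function.Surjective τ

section Aux

variable {G A : Type*} [Group G] (H : Subgroup G)

/-- membership fact for the canonical coset representative -/
lemma aux_mem (g : G) : ((QuotientGroup.mk g : G ⧸ H)).out⁻¹ * g ∈ H := by
  rw [← QuotientGroup.eq, QuotientGroup.out_eq']

/-- restrict a configuration on `G` to the coset `q` viewed as a copy of `H` -/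
noncomputable def res (c : G → A) (q : G ⧸ H) : H → A :=
  fun h => c (q.out * h.1)

/-- assemble a family of configurations on the cosets into a configuration on `G` -/
noncomputable def comb (f : G ⧸ H → H → A) : G → A :=
  fun g => f (QuotientGroup.mk g) ⟨((QuotientGroup.mk g : G ⧸ H)).out⁻¹ * g, aux_mem H g⟩

lemma comb_apply_eq (f : G ⧸ H → H → A) (q : G ⧸ H) (g : G)
    (hg : QuotientGroup.mk g = q) (h : H) (hh : (q.out : G) * h.1 = g) :
    comb H f g = f q h := by
  subst hg
  unfold comb
  congr 1
  exact Subtype.ext (by rw [inv_mul_eq_iff_eq_mul]; exact hh.symm)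

lemma res_comb (f : G ⧸ H → H → A) (q : G ⧸ H) : res H (comb H f) q = f q := by
  funext h
  show comb H f (q.out * h.1) = f q h
  exact comb_apply_eq H f q _ (by rw [QuotientGroup.mk_mul_of_mem _ h.2, QuotientGroup.out_eq']) h rfl

lemma comb_res (c : G → A) : comb H (res H c) = c := by
  funext g
  show c (_ * (_ * g)) = c g
  rw [mul_inv_cancel_left]

/-- transfer of injectivity / surjectivity between a map on `A^G` and a
compatible map on `A^H`. -/
lemma transfer {τ : (G → A) → (G → A)} {σ : (H → A) → (H → A)}
    (hcomp : ∀ (c : G → A) (q : G ⧸ H), res H (τ c) q = σ (res H c q)) :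
    (Function.Injective τ → Function.Injective σ) ∧
    (Function.Surjective σ → Function.Surjective τ) ∧
    (Function.Injective σ → Function.Injective τ) ∧
    (Function.Surjective τ → Function.Surjective σ) := by
  refine ⟨?_, ?_, ?_, ?_⟩
  · intro hinj d₁ d₂ hd
    have key : ∀ d : H → A, τ (comb H fun _ => d) = comb H fun _ => σ d := by
      intro d
      conv_lhs => rw [← comb_res H (τ (comb H fun _ => d))]
      exact congrArg (comb H) (funext fun q => by rw [hcomp, res_comb])
    have : comb H (fun _ : G ⧸ H => d₁) = comb H fun _ => d₂ := by
      apply hinj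
      rw [key, key, hd]
    have h2 := congrArg (fun c => res H c (QuotientGroup.mk 1)) this
    simpa [res_comb] using h2
  · intro hs c
    refine ⟨comb H fun q => (hs (res H c q)).choose, ?_⟩
    rw [← comb_res H (τ (comb H fun q => (hs (res H c q)).choose))]
    conv_rhs => rw [← comb_res H c]
    exact congrArg (comb H) (funext fun q => by
      rw [hcomp, res_comb]; exact (hs (res H c q)).choose_spec)
  · intro hinj c₁ c₂ hc
    rw [← comb_res H c₁, ← comb_res H c₂]
    exact congrArg (comb H) (funext fun q => hinj (by rw [← hcomp, ← hcomp, hc]))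
  · intro hs d
    obtain ⟨c', hc'⟩ := hs (comb H fun _ => d)
    refine ⟨res H c' (QuotientGroup.mk 1), ?_⟩
    rw [← hcomp, hc', res_comb]

end Aux

section Mul

variable {G A : Type*} [Group G] [Group A]

/-- the local defining map of a group cellular automaton is multiplicative -/
lemma mu_mul {M : Finset G} {μ : (M → A) → A} {τ : (G → A) → (G → A)}
    (hloc : ∀ (c : G → A) (g : G), τ c g = μ (fun m => c (g * m.1)))
    (hmul : ∀ x y : G → A, τ (x * y) = τ x * τ y)
    (u v : M → A) : μ (u * v) = μ u * μ v := by
  classical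
  set ext : (M → A) → G → A := fun w g => if h : g ∈ M then w ⟨g, h⟩ else 1 with hext
  have hres : ∀ w : M → A, (fun m : M => ext w ((1 : G) * m.1)) = w := by
    intro w
    funext m
    simp [hext, one_mul, m.2]
  have h := congrFun (hmul (ext u) (ext v)) 1
  rw [Pi.mul_apply, hloc, hloc, hloc] at h
  have hq : (fun m : M => (ext u * ext v) ((1 : G) * m.1)) = u * v := by
    funext m
    rw [Pi.mul_apply]
    have hu := congrFun (hres u) m
    have hv := congrFun (hres v) m
    rw [hu, hv, Pi.mul_apply]
  rw [hq, hres u, hres v] at h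
  exact h

end Mul

/-- a group is weakly surjunctive iff all its finitely generated
subgroups are weakly surjunctive. -/
theorem stmt3 (G : Type*) [Group G] :
    WeaklySurjunctive G ↔ ∀ H : Subgroup G, H.FG → WeaklySurjunctive H := by
  classical
  constructor
  · -- G weakly surjunctive → every (f.g.) subgroup is
    intro hG H _hFG A _ _ σ ⟨⟨MH, μH, hloc⟩, hmul⟩ hinj
    -- extend σ to a group cellular automaton on G
    set M : Finset G := MH.map ⟨Subtype.val, Subtype.val_injective⟩ with hM
    set μ : (M → A) → A := fun w =>
      μH fun m => w ⟨m.1.1, by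
        rw [hM]; exact Finset.mem_map_of_mem _ m.2⟩ with hμ
    set τ : (G → A) → (G → A) := fun c g => μ fun m => c (g * m.1) with hτ
    have hτloc : ∀ (c : G → A) (g : G), τ c g = μ (fun m => c (g * m.1)) :=
      fun _ _ => rfl
    have hμmul : ∀ u v : MH → A, μH (u * v) = μH u * μH v :=
      mu_mul hloc hmul
    have hτmul : ∀ x y : G → A, τ (x * y) = τ x * τ y := by
      intro x y
      funext g
      show μH _ = μH _ * μH _
      rw [← hμmul]
      congr 1
    have hcomp : ∀ (c : G → A) (q : G ⧸ H), res H (τ c) q = σ (res H c q) := by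
      intro c q
      funext h
      show μH _ = σ (res H c q) h
      rw [hloc]
      congr 1
      funext m
      show c (q.out * h.1 * m.1.1) = c (q.out * ((h * m.1 : H) : G))
      rw [mul_assoc]
      rfl
    obtain ⟨h1, _, h3, h4⟩ := transfer H hcomp
    have hτinj : Function.Injective τ := h3 hinj
    have hτsurj : Function.Surjective τ :=
      hG A τ ⟨⟨M, μ, hτloc⟩, hτmul⟩ hτinj
    exact h4 hτsurj
  · -- all f.g. subgroups weakly surjunctive → G weakly surjunctive
    intro hfg A _ _ τ ⟨⟨M, μ, hloc⟩, hmul⟩ hinj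
    set H : Subgroup G := Subgroup.closure ↑M with hH
    have hFG : H.FG := ⟨M, rfl⟩
    have hMH : ∀ m ∈ M, m ∈ H := fun m hm =>
      Subgroup.subset_closure hm
    -- restriction of τ to H
    set MH : Finset H := M.preimage Subtype.val (Subtype.val_injective.injOn) with hMHdef
    have memMH : ∀ m : M, (⟨m.1, hMH m.1 m.2⟩ : H) ∈ MH := by
      intro m
      rw [hMHdef, Finset.mem_preimage]
      exact m.2
    set μH : (MH → A) → A := fun w =>
      μ fun m => w ⟨⟨m.1, hMH m.1 m.2⟩, memMH m⟩ with hμH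
    set σ : (H → A) → (H → A) := fun d h => μH fun m => d (h * m.1) with hσ
    have hσloc : ∀ (d : H → A) (h : H), σ d h = μH (fun m => d (h * m.1)) :=
      fun _ _ => rfl
    have hμmul : ∀ u v : M → A, μ (u * v) = μ u * μ v := mu_mul hloc hmul
    have hσmul : ∀ x y : H → A, σ (x * y) = σ x * σ y := by
      intro x y
      funext h
      show μ _ = μ _ * μ _
      rw [← hμmul]
      congr 1
    have hcomp : ∀ (c : G → A) (q : G ⧸ H), res H (τ c) q = σ (res H c q) := by
      intro c q
      funext h
      show τ c (q.out * h.1) = μ _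
      rw [hloc]
      congr 1
      funext m
      show c (q.out * h.1 * m.1) = c (q.out * ((h * ⟨m.1, hMH m.1 m.2⟩ : H) : G))
      rw [mul_assoc]
      rfl
    obtain ⟨h1, h2, _, _⟩ := transfer H hcomp
    have hσinj : Function.Injective σ := h1 hinj
    have hσsurj : Function.Surjective σ :=
      hfg H hFG A σ ⟨⟨MH, μH, hσloc⟩, hσmul⟩ hσinj
    exact h2 hσsurj
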